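/- Let I and K be ideals on ℕ such that K is not contained in I, let X be a nonzero real normed space, and let x ≠ y in X. Pick M ∈ K \ I and define x_n = y if n ∈ M and x_n = x otherwise. Then (x_n) is weakly K-convergent to x (hence weakly I^K-convergent to x) but not weakly I-convergent to x. -/

import Mathlib

open Classical Filter

/-- An ideal on ℕ: contains ∅, closed under subsets and finite unions. -/
def IsIdeal (I : Set (Set ℕ)) : Prop :=
  ∅ ∈ I ∧ (∀ A B : Set ℕ, A ∈ I → B ⊆ A → B ∈ I) ∧
    (∀ A B : Set ℕ, A ∈ I → B ∈ I → A ∪ B ∈ I)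

/-- A nontrivial (proper) ideal. -/
def NontrivialIdeal (I : Set (Set ℕ)) : Prop :=
  IsIdeal I ∧ Set.univ ∉ I ∧ I ≠ {∅}

/-- An admissible ideal: nontrivial and containing all singletons. -/
def AdmissibleIdeal (I : Set (Set ℕ)) : Prop :=
  NontrivialIdeal I ∧ ∀ n : ℕ, ({n} : Set ℕ) ∈ I

/-- The modified sequence: `x n` on `M`, the constant `a` off `M`. -/
noncomputable def modSeq {X : Type*} (M : Set ℕ) (x : ℕ → X) (a : X) : ℕ → X :=
  fun n => if n ∈ M then x n else a

/-- Weak `K`-convergence of a sequence in a normed space. -/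
def WeakConv {X : Type*} [NormedAddCommGroup X] [NormedSpace ℝ X]
    (K : Set (Set ℕ)) (x : ℕ → X) (a : X) : Prop :=
  ∀ f : X →L[ℝ] ℝ, ∀ ε : ℝ, 0 < ε → {n : ℕ | ε ≤ |f (x n) - f a|} ∈ K

/-- Weak `I^K`-convergence: some `M` in the dual filter of `I` such that the
modified sequence is weakly `K`-convergent. -/
def WeakIK {X : Type*} [NormedAddCommGroup X] [NormedSpace ℝ X]
    (I K : Set (Set ℕ)) (x : ℕ → X) (a : X) : Prop :=
  ∃ M : Set ℕ, Mᶜ ∈ I ∧ WeakConv K (modSeq M x a) a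

/-- Ordinary weak convergence. -/
def WeakTendsto {X : Type*} [NormedAddCommGroup X] [NormedSpace ℝ X]
    (x : ℕ → X) (a : X) : Prop :=
  ∀ f : X →L[ℝ] ℝ, Tendsto (fun n => f (x n)) atTop (nhds (f a))

/-- Weak* `K`-convergence of a sequence of continuous linear functionals. -/
def WeakStarConv {X : Type*} [NormedAddCommGroup X] [NormedSpace ℝ X]
    (K : Set (Set ℕ)) (f : ℕ → X →L[ℝ] ℝ) (g : X →L[ℝ] ℝ) : Prop :=
  ∀ x : X, ∀ ε : ℝ, 0 < ε → {n : ℕ | ε ≤ |f n x - g x|} ∈ K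

/-- Weak* `I^K`-convergence. -/
def WeakStarIK {X : Type*} [NormedAddCommGroup X] [NormedSpace ℝ X]
    (I K : Set (Set ℕ)) (f : ℕ → X →L[ℝ] ℝ) (g : X →L[ℝ] ℝ) : Prop :=
  ∃ M : Set ℕ, Mᶜ ∈ I ∧ WeakStarConv K (modSeq M f g) g

/-- Ordinary weak* convergence (pointwise on X). -/
def WeakStarTendsto {X : Type*} [NormedAddCommGroup X] [NormedSpace ℝ X]
    (f : ℕ → X →L[ℝ] ℝ) (g : X →L[ℝ] ℝ) : Prop :=
  ∀ x : X, Tendsto (fun n => f n x) atTop (nhds (g x))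

/-- The join of two ideals: `{A ∪ B : A ∈ I, B ∈ K}`. -/
def idealJoin (I K : Set (Set ℕ)) : Set (Set ℕ) :=
  {C | ∃ A ∈ I, ∃ B ∈ K, C = A ∪ B}

theorem stmt_6 {X : Type*} [NormedAddCommGroup X] [NormedSpace ℝ X]
    (I K : Set (Set ℕ)) (hI : IsIdeal I) (hK : IsIdeal K)
    (x y : X) (hxy : x ≠ y) (M : Set ℕ) (hMK : M ∈ K) (hMI : M ∉ I) :
    WeakConv K (fun n => if n ∈ M then y else x) x ∧
    WeakIK I K (fun n => if n ∈ M then y else x) x ∧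
    ¬ WeakConv I (fun n => if n ∈ M then y else x) x := by
  have hconv : WeakConv K (fun n => if n ∈ M then y else x) x := by
    intro f ε hε
    refine hK.2.1 M _ hMK ?_
    intro n hn
    by_contra hnM
    simp only [Set.mem_setOf_eq, if_neg hnM, sub_self, abs_zero] at hn
    linarith
  refine ⟨hconv, ⟨Set.univ, by simpa using hI.1, ?_⟩, ?_⟩
  · intro f ε hε
    have : modSeq Set.univ (fun n => if n ∈ M then y else x) x =
        fun n => if n ∈ M then y else x := by
      funext n; simp [modSeq]
    rw [this]
    exact hconv f ε hε
  · intro hWI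
    obtain ⟨f, hf1, hf2⟩ := exists_dual_vector ℝ (y - x) (norm_ne_zero_iff.mpr (sub_ne_zero.mpr hxy.symm))
    have hnorm : (0:ℝ) < ‖y - x‖ := by
      simpa using norm_pos_iff.mpr (sub_ne_zero.mpr hxy.symm)
    have hmem := hWI f ‖y - x‖ hnorm
    apply hMI
    refine hI.2.1 _ M hmem ?_
    intro n hn
    simp only [Set.mem_setOf_eq, if_pos hn]
    have h2 : f y - f x = ‖y - x‖ := by
      rw [← map_sub]; simpa using hf2
    rw [h2, abs_of_pos hnorm]
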